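/- Let C be an abelian category, X ⊆ C closed under extensions, and (A,B) a right X-complete, X-hereditary pair with B closed under direct summands. Then for every M ∈ X admitting a finite B_X-coresolution, id_{A∩X}(M) = coresdim_B^X(M). -/

import Mathlib

open CategoryTheory CategoryTheory.Limits

universe w v u

variable {C : Type u} [Category.{v} C] [Abelian C] [HasExt.{w} C]

/-- `Ext^i(M, N) = 0`. -/
def extZero (M N : C) (i : ℕ) : Prop := Subsingleton (Abelian.Ext M N i)

/-- `0 → A → B → D → 0` is a short exact sequence. -/
def IsSES {A B D : C} (f : A ⟶ B) (g : B ⟶ D) : Prop :=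
  ∃ w : f ≫ g = 0, (ShortComplex.mk f g w).ShortExact

/-- There exists a short exact sequence `0 → A → B → D → 0`. -/
def SES (A B D : C) : Prop := ∃ (f : A ⟶ B) (g : B ⟶ D), IsSES f g

/-- The right orthogonal class `𝒯^⊥` (vanishing of `Ext^i` for all `i > 0`). -/
def rPerp (𝒯 : Set C) : Set C := {N | ∀ M ∈ 𝒯, ∀ i, 0 < i → extZero M N i}

/-- The right `1`-st orthogonal class `𝒯^{⊥₁}`. -/
def rPerp1 (𝒯 : Set C) : Set C := {N | ∀ M ∈ 𝒯, extZero M N 1}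

/-- The left orthogonal class `⊥𝒮`. -/
def lPerp (𝒮 : Set C) : Set C := {M | ∀ N ∈ 𝒮, ∀ i, 0 < i → extZero M N i}

/-- The left `1`-st orthogonal class `⊥₁𝒮`. -/
def lPerp1 (𝒮 : Set C) : Set C := {M | ∀ N ∈ 𝒮, extZero M N 1}

/-- `α` is a relative cogenerator in `𝒳`. -/
def IsRelCogen (α 𝒳 : Set C) : Prop :=
  α ⊆ 𝒳 ∧ ∀ X ∈ 𝒳, ∃ (W X' : C), W ∈ α ∧ X' ∈ 𝒳 ∧ SES X W X'

/-- `β` is a relative generator in `𝒳`. -/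
def IsRelGen (β 𝒳 : Set C) : Prop :=
  β ⊆ 𝒳 ∧ ∀ X ∈ 𝒳, ∃ (X' W : C), W ∈ β ∧ X' ∈ 𝒳 ∧ SES X' W X

/-- `pd_𝒳(𝒯) ≤ n`. -/
def pdLE (𝒳 𝒯 : Set C) (n : ℕ) : Prop :=
  ∀ M ∈ 𝒯, ∀ X ∈ 𝒳, ∀ k, n < k → extZero M X k

/-- `𝒴` is closed by `n`-quotients in `𝒳`: for any exact sequence
`0 → K n → Y (n-1) → ⋯ → Y 0 → K 0 → 0` (encoded by its short exact pieces
`0 → K (i+1) → Y i → K i → 0`) with all `Y i ∈ 𝒴` and all kernels `K i ∈ 𝒳`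
(in particular the end terms), the end term `K 0` is in `𝒴`. -/
def ClosedByQuotients (𝒴 𝒳 : Set C) (n : ℕ) : Prop :=
  ∀ (K Y : ℕ → C),
    (∀ i < n, Y i ∈ 𝒴) →
    (∀ i ≤ n, K i ∈ 𝒳) →
    (∀ i < n, SES (K (i + 1)) (Y i) (K i)) →
    K 0 ∈ 𝒴

/-- `M` has a `𝒴_𝒳`-coresolution of length `n`, i.e. an exact sequence
`0 → M → Y 0 → ⋯ → Y (n-1) → Z n → 0` with `Z n ∈ 𝒳 ∩ 𝒴`, `Y i ∈ 𝒴`, and all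
intermediate images `Z i ∈ 𝒳`. -/
def CoresLen (𝒴 𝒳 : Set C) (M : C) (n : ℕ) : Prop :=
  ∃ (Z Y : ℕ → C), Z 0 = M ∧ Z n ∈ 𝒳 ∩ 𝒴 ∧
    (∀ i < n, Y i ∈ 𝒴) ∧ (∀ i, 0 < i → i < n → Z i ∈ 𝒳) ∧
    (∀ i < n, SES (Z i) (Y i) (Z (i + 1)))

/-- The `𝒴_𝒳`-coresolution dimension of `M`, as an extended natural number. -/
noncomputable def coresdim (𝒴 𝒳 : Set C) (M : C) : ℕ∞ :=
  sInf {e : ℕ∞ | ∃ m : ℕ, e = (m : ℕ∞) ∧ CoresLen 𝒴 𝒳 M m}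

/-- The `𝒳`-injective dimension of `M`, as an extended natural number. -/
noncomputable def relId (𝒳 : Set C) (M : C) : ℕ∞ :=
  sInf {e : ℕ∞ | ∃ m : ℕ, e = (m : ℕ∞) ∧ ∀ X ∈ 𝒳, ∀ k, m < k → extZero X M k}

/-- `𝒯` is precovering. -/
def Precovering (𝒯 : Set C) : Prop :=
  ∀ M : C, ∃ (Z : C) (f : Z ⟶ M), Z ∈ 𝒯 ∧
    ∀ (Z' : C) (h : Z' ⟶ M), Z' ∈ 𝒯 → ∃ h' : Z' ⟶ Z, h' ≫ f = h

/-- `𝒯` is preenveloping. -/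
def Preenveloping (𝒯 : Set C) : Prop :=
  ∀ M : C, ∃ (Z : C) (f : M ⟶ Z), Z ∈ 𝒯 ∧
    ∀ (Z' : C) (h : M ⟶ Z'), Z' ∈ 𝒯 → ∃ h' : Z ⟶ Z', f ≫ h' = h

/-- `𝒯 = add 𝒯`: closed under finite coproducts and under direct summands (retracts). -/
def IsAddClosed (𝒯 : Set C) : Prop :=
  (∀ A B : C, A ∈ 𝒯 → B ∈ 𝒯 → (A ⊞ B) ∈ 𝒯) ∧
  (∀ (A B : C) (i : A ⟶ B) (r : B ⟶ A), i ≫ r = 𝟙 A → B ∈ 𝒯 → A ∈ 𝒯)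

/-- Closed under direct summands (retracts). -/
def IsSmdClosed (𝒯 : Set C) : Prop :=
  ∀ (A B : C) (i : A ⟶ B) (r : B ⟶ A), i ≫ r = 𝟙 A → B ∈ 𝒯 → A ∈ 𝒯

/-- Closed under extensions. -/
def IsExtClosed (𝒯 : Set C) : Prop :=
  ∀ (A E B : C), A ∈ 𝒯 → B ∈ 𝒯 → SES A E B → E ∈ 𝒯

/-- `ℬ` is `𝒳`-coresolving: it contains an `𝒳`-injective relative cogenerator in `𝒳`,
is closed under mono-cokernels in `ℬ ∩ 𝒳`, and is closed under extensions. -/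
def IsCoresolving (ℬ 𝒳 : Set C) : Prop :=
  (∃ α : Set C, α ⊆ ℬ ∩ 𝒳 ∧ (∀ X ∈ 𝒳, ∀ A ∈ α, ∀ i, 0 < i → extZero X A i) ∧
    IsRelCogen α 𝒳) ∧
  (∀ (M M' M'' : C), M ∈ ℬ ∩ 𝒳 → M' ∈ ℬ ∩ 𝒳 → SES M M' M'' → M'' ∈ ℬ) ∧
  IsExtClosed ℬ

/-- `(𝒜, ℬ)` is a left `𝒳`-complete pair. -/
def LeftComplete (𝒜 ℬ 𝒳 : Set C) : Prop :=
  ∀ X ∈ 𝒳, ∃ B A : C, B ∈ ℬ ∩ 𝒳 ∧ A ∈ 𝒜 ∩ 𝒳 ∧ SES B A X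

/-- `(𝒜, ℬ)` is a right `𝒳`-complete pair. -/
def RightComplete (𝒜 ℬ 𝒳 : Set C) : Prop :=
  ∀ X ∈ 𝒳, ∃ B A : C, B ∈ ℬ ∩ 𝒳 ∧ A ∈ 𝒜 ∩ 𝒳 ∧ SES X B A

/-- `(𝒜, ℬ)` is an `𝒳`-hereditary pair. -/
def IsHereditary (𝒜 ℬ 𝒳 : Set C) : Prop :=
  ∀ A ∈ 𝒜 ∩ 𝒳, ∀ B ∈ ℬ ∩ 𝒳, ∀ i, 1 ≤ i → extZero A B i

/-- `M` has a (possibly infinite) `𝒴_𝒳`-coresolution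
`0 → M → Y 0 → Y 1 → ⋯` with `Y i ∈ 𝒴 ∪ {0}` and all images in `𝒳 ∪ {0}`. -/
def InfCores (𝒳 𝒴 : Set C) (M : C) : Prop :=
  ∃ (Z Y : ℕ → C), Z 0 = M ∧
    (∀ i, Y i ∈ 𝒴 ∨ IsZero (Y i)) ∧
    (∀ i, 0 < i → Z i ∈ 𝒳 ∨ IsZero (Z i)) ∧
    (∀ i, SES (Z i) (Y i) (Z (i + 1)))

/-- The class `(𝒳,𝒴)_∞^∨`. -/
def InfCoresClass (𝒳 𝒴 : Set C) : Set C := {M | M ∈ 𝒳 ∧ InfCores 𝒳 𝒴 M}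

/-- The class `(𝒳,𝒴)^∨`. -/
def FinCoresClass (𝒳 𝒴 : Set C) : Set C := {M | M ∈ 𝒳 ∧ ∃ m : ℕ, CoresLen 𝒴 𝒳 M m}


section Aux

open Abelian

variable {C : Type u} [Category.{v} C] [Abelian C] [HasExt.{w} C]

lemma aux_sub₃ {S : ShortComplex C} (hS : S.ShortExact) (X : C) (n : ℕ)
    (h₂ : Subsingleton (Abelian.Ext X S.X₂ n))
    (h₁ : Subsingleton (Abelian.Ext X S.X₁ (n + 1))) :
    Subsingleton (Abelian.Ext X S.X₃ n) := by
  refine subsingleton_of_forall_eq 0 fun a => ?_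
  have ha : a.comp hS.extClass rfl = 0 := @Subsingleton.elim _ h₁ _ _
  obtain ⟨x₂, hx⟩ := Abelian.Ext.covariant_sequence_exact₃ X hS a rfl ha
  have hx0 : x₂ = 0 := @Subsingleton.elim _ h₂ _ _
  rw [← hx, hx0, Abelian.Ext.zero_comp]

lemma aux_sub₁ {S : ShortComplex C} (hS : S.ShortExact) (X : C) (n : ℕ)
    (h₂ : Subsingleton (Abelian.Ext X S.X₂ (n + 1)))
    (h₃ : Subsingleton (Abelian.Ext X S.X₃ n)) :
    Subsingleton (Abelian.Ext X S.X₁ (n + 1)) := by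
  refine subsingleton_of_forall_eq 0 fun a => ?_
  have ha : a.comp (Abelian.Ext.mk₀ S.f) (add_zero _) = 0 := @Subsingleton.elim _ h₂ _ _
  obtain ⟨x₃, hx⟩ := Abelian.Ext.covariant_sequence_exact₁ X hS a ha rfl
  have hx0 : x₃ = 0 := @Subsingleton.elim _ h₃ _ _
  rw [← hx, hx0, Abelian.Ext.zero_comp]

lemma aux_retraction {S : ShortComplex C} (hS : S.ShortExact)
    (h : Subsingleton (Abelian.Ext S.X₃ S.X₁ 1)) :
    ∃ r : S.X₂ ⟶ S.X₁, S.f ≫ r = 𝟙 S.X₁ := by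
  letI := HasDerivedCategory.standard C
  have hc : hS.extClass = 0 := @Subsingleton.elim _ h _ _
  have hδ : hS.singleδ = 0 := by
    rw [← hS.extClass_hom, hc, Abelian.Ext.zero_hom]
  obtain ⟨s, hs⟩ := Pretriangulated.Triangle.coyoneda_exact₃ _
    hS.singleTriangle_distinguished (𝟙 _) (by
      dsimp [ShortComplex.ShortExact.singleTriangle]
      rw [hδ]; exact comp_zero)
  let F := DerivedCategory.singleFunctor C 0
  let H := DerivedCategory.homologyFunctor C 0
  let e : F ⋙ H ≅ 𝟭 C :=
    Functor.isoWhiskerRight ((SingleFunctors.evaluation _ _ 0).mapIso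
      (DerivedCategory.singleFunctorsPostcompQIso C)) H ≪≫
    Functor.associator _ _ _ ≪≫
    Functor.isoWhiskerLeft (CochainComplex.singleFunctor C 0)
      (DerivedCategory.homologyFunctorFactors C 0) ≪≫
    HomologicalComplex.homologyFunctorSingleIso C (ComplexShape.up ℤ) 0
  obtain ⟨s, hs⟩ : ∃ s' : F.obj S.X₃ ⟶ F.obj S.X₂, 𝟙 _ = s' ≫ F.map S.g := ⟨s, hs⟩
  let t : S.X₃ ⟶ S.X₂ := e.inv.app S.X₃ ≫ H.map s ≫ e.hom.app S.X₂
  have ht : t ≫ S.g = 𝟙 S.X₃ := by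
    have hnat : H.map (F.map S.g) ≫ e.hom.app S.X₃ = e.hom.app S.X₂ ≫ S.g :=
      e.hom.naturality S.g
    have hsg : s ≫ F.map S.g = 𝟙 (F.obj S.X₃) := hs.symm
    calc t ≫ S.g = e.inv.app S.X₃ ≫ H.map s ≫ (e.hom.app S.X₂ ≫ S.g) := by
          simp [t, Category.assoc]
      _ = e.inv.app S.X₃ ≫ (H.map s ≫ H.map (F.map S.g)) ≫ e.hom.app S.X₃ := by
          rw [← hnat]; simp [Category.assoc]
      _ = e.inv.app S.X₃ ≫ e.hom.app S.X₃ := by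
          rw [← H.map_comp, hsg, H.map_id]; simp
      _ = 𝟙 S.X₃ := e.inv_hom_id_app S.X₃
  have hmono : Mono S.f := hS.mono_f
  exact ⟨(ShortComplex.Splitting.ofExactOfSection S hS.exact t ht hmono).r,
    (ShortComplex.Splitting.ofExactOfSection S hS.exact t ht hmono).f_r⟩

lemma lemA (𝒳 𝒜 ℬ : Set C) (hX : IsExtClosed 𝒳) (hher : IsHereditary 𝒜 ℬ 𝒳)
    (M : C) (hM : M ∈ 𝒳) (m : ℕ) (hQ : CoresLen ℬ 𝒳 M m) :
    ∀ A' ∈ 𝒜 ∩ 𝒳, ∀ k, m < k → extZero A' M k := by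
  obtain ⟨Z, Y, hZ0, hZm, hY, hZ, hses⟩ := hQ
  have hZX : ∀ i ≤ m, Z i ∈ 𝒳 := by
    intro i hi
    rcases Nat.lt_or_ge i m with h | h
    · rcases Nat.eq_zero_or_pos i with h0 | h0
      · subst h0; rw [hZ0]; exact hM
      · exact hZ i h0 h
    · have : i = m := le_antisymm hi h
      subst this; exact hZm.1
  have hYX : ∀ i < m, Y i ∈ 𝒳 :=
    fun i hi => hX _ _ _ (hZX i (le_of_lt hi)) (hZX (i + 1) hi) (hses i hi)
  have key : ∀ j, j ≤ m → ∀ A' ∈ 𝒜 ∩ 𝒳, ∀ k, 0 < k →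
      extZero A' (Z (m - j)) (k + j) := by
    intro j
    induction j with
    | zero =>
      intro _ A' hA' k hk
      exact hher A' hA' (Z m) ⟨hZm.2, hZm.1⟩ (k + 0) (by omega)
    | succ j ih =>
      intro hj A' hA' k hk
      have him : m - (j + 1) < m := by omega
      obtain ⟨f, g, w, hse⟩ := hses (m - (j + 1)) him
      have h₂ : Subsingleton (Abelian.Ext A' (Y (m - (j + 1))) (k + j + 1)) :=
        hher A' hA' (Y (m - (j + 1))) ⟨hY _ him, hYX _ him⟩ _ (by omega)
      have h₃ : Subsingleton (Abelian.Ext A' (Z (m - (j + 1) + 1)) (k + j)) := by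
        have := ih (by omega) A' hA' k hk
        have hi1 : m - j = m - (j + 1) + 1 := by omega
        rw [hi1] at this
        exact this
      exact aux_sub₁ hse A' (k + j) h₂ h₃
  intro A' hA' k hk
  have := key m le_rfl A' hA' (k - m) (by omega)
  rw [Nat.sub_self] at this
  have hk' : k - m + m = k := by omega
  rw [hk', hZ0] at this
  exact this

lemma lemB (𝒳 𝒜 ℬ : Set C) (hrc : RightComplete 𝒜 ℬ 𝒳) (hher : IsHereditary 𝒜 ℬ 𝒳)
    (hsmd : IsSmdClosed ℬ) :
    ∀ n, ∀ M ∈ 𝒳, (∀ A' ∈ 𝒜 ∩ 𝒳, ∀ k, n < k → extZero A' M k) →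
      CoresLen ℬ 𝒳 M n := by
  intro n
  induction n with
  | zero =>
    intro M hM hP
    obtain ⟨B, A, hB, hA, f, g, w, hse⟩ := hrc M hM
    have hsub : Subsingleton (Abelian.Ext A M 1) := hP A hA 1 (by omega)
    obtain ⟨r, hr⟩ := aux_retraction hse hsub
    have hMB : M ∈ ℬ := hsmd M B f r hr hB.1
    exact ⟨fun _ => M, fun _ => M, rfl, ⟨hM, hMB⟩,
      fun i hi => absurd hi (by omega),
      fun i hi hi' => absurd hi' (by omega),
      fun i hi => absurd hi (by omega)⟩
  | succ n ih =>
    intro M hM hP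
    obtain ⟨B, A, hB, hA, hses⟩ := hrc M hM
    have hPA : ∀ A' ∈ 𝒜 ∩ 𝒳, ∀ k, n < k → extZero A' A k := by
      intro A' hA' k hk
      obtain ⟨f, g, w, hse⟩ := hses
      exact aux_sub₃ hse A' k (hher A' hA' B hB k (by omega))
        (hP A' hA' (k + 1) (by omega))
    obtain ⟨Z', Y', hZ'0, hZ'n, hY', hZ', hses'⟩ := ih A hA.2 hPA
    refine ⟨fun i => match i with | 0 => M | (i + 1) => Z' i,
      fun i => match i with | 0 => B | (i + 1) => Y' i, rfl, hZ'n, ?_, ?_, ?_⟩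
    · intro i hi
      match i with
      | 0 => exact hB.1
      | (i + 1) => exact hY' i (by omega)
    · intro i hi0 hi
      match i with
      | (i + 1) =>
        match i with
        | 0 => show Z' 0 ∈ 𝒳; rw [hZ'0]; exact hA.2
        | (j + 1) => exact hZ' (j + 1) (by omega) (by omega)
    · intro i hi
      match i with
      | 0 =>
        show SES M B (Z' 0)
        rw [hZ'0]; exact hses
      | (i + 1) => exact hses' i (by omega)

end Aux

/-- if `𝒳` is closed under extensions and `(𝒜, ℬ)` is a right
`𝒳`-complete, `𝒳`-hereditary pair with `ℬ` closed under direct summands, then for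
every `M ∈ 𝒳` admitting a finite `ℬ_𝒳`-coresolution,
`id_{𝒜∩𝒳}(M) = coresdim_ℬ^𝒳(M)`. -/
theorem stmt_16 (𝒳 𝒜 ℬ : Set C) (hX : IsExtClosed 𝒳)
    (hrc : RightComplete 𝒜 ℬ 𝒳) (hher : IsHereditary 𝒜 ℬ 𝒳)
    (hsmd : IsSmdClosed ℬ) :
    ∀ M ∈ 𝒳, (∃ m : ℕ, CoresLen ℬ 𝒳 M m) →
      relId (𝒜 ∩ 𝒳) M = coresdim ℬ 𝒳 M := by
  intro M hM _hfin
  have hPQ : ∀ m : ℕ,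
      (∀ X' ∈ 𝒜 ∩ 𝒳, ∀ k, m < k → extZero X' M k) ↔ CoresLen ℬ 𝒳 M m :=
    fun m => ⟨fun h => lemB 𝒳 𝒜 ℬ hrc hher hsmd m M hM h,
      fun h => lemA 𝒳 𝒜 ℬ hX hher M hM m h⟩
  unfold relId coresdim
  congr 1
  ext e
  simp only [Set.mem_setOf_eq]
  constructor
  · rintro ⟨m, rfl, h⟩; exact ⟨m, rfl, (hPQ m).1 h⟩
  · rintro ⟨m, rfl, h⟩; exact ⟨m, rfl, (hPQ m).2 h⟩
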